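/- Let λ, μ, q > 0 and C_U > u > 0, s ∈ (0,1), and consider the Markov chain on ℕ³ (coordinates (r, ℓ, q̃)) with transitions x → x + e_R − e_L at rate κLR(C_U − u)·ℓ, x → x + e_R at rate κSR·s, x → x − e_R at rate (κRS·u + κRI(C_M − 1 + s))·r, x → x + e_L at rate κIL(1 − s), x → x + e_Q at rate κ0Q, and x → x − e_Q at rate κQU·u·q̃, where all κ's and C_M − 1 + s are positive. Then the product measure Poisson((κIL(1−s) + κSR·s)/(κRI(C_M − (1−s)) + κRS·u)) ⊗ Poisson(κIL(1−s)/(κLR(C_U − u))) ⊗ Poisson(κ0Q/(κQU·u)) is invariant for this chain. -/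

import Mathlib

open Real

/-- The Poisson distribution with parameter `a`. -/
noncomputable def poissonP (a : ℝ) (x : ℕ) : ℝ := exp (-a) * a ^ x / (Nat.factorial x)

lemma poissonP_succ (a : ℝ) (n : ℕ) :
    poissonP a (n + 1) = a / ((n : ℝ) + 1) * poissonP a n := by
  have h1 : ((Nat.factorial n : ℝ)) ≠ 0 := by positivity
  have h2 : ((n : ℝ) + 1) ≠ 0 := by positivity
  simp only [poissonP, Nat.factorial_succ]
  push_cast
  field_simp
  ring

/-- Invariant product Poisson measure for the frozen fast process of the
optimal sequestration regime (formula (4.3) of Theorem 4.2): chain on `ℕ³`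
(coordinates `(r, ℓ, q̃)`) with transitions `x → x + e_R − e_L` at rate
`κLR(C_U−u)·ℓ`, `x → x + e_R` at rate `κSR·s`, `x → x − e_R` at rate
`(κRS·u + κRI(C_M−1+s))·r`, `x → x + e_L` at rate `κIL(1−s)`, `x → x + e_Q`
at rate `κ0Q`, `x → x − e_Q` at rate `κQU·u·q̃`; global balance at every
state. -/
theorem stmt18 (κLR κSR κRS κRI κIL κ0Q κQU C_M C_U u s : ℝ)
    (hκLR : 0 < κLR) (hκSR : 0 < κSR) (hκRS : 0 < κRS) (hκRI : 0 < κRI)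
    (hκIL : 0 < κIL) (hκ0Q : 0 < κ0Q) (hκQU : 0 < κQU)
    (hu : 0 < u) (huC : u < C_U) (hs : s ∈ Set.Ioo (0 : ℝ) 1)
    (hCM : 0 < C_M - 1 + s)
    (πR πL πQ : ℕ → ℝ)
    (hπR : πR = poissonP ((κIL * (1 - s) + κSR * s)
        / (κRI * (C_M - (1 - s)) + κRS * u)))
    (hπL : πL = poissonP (κIL * (1 - s) / (κLR * (C_U - u))))
    (hπQ : πQ = poissonP (κ0Q / (κQU * u)))
    (y : ℕ × ℕ × ℕ) :
    (if y.1 = 0 then 0 else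
        κLR * (C_U - u) * (y.2.1 + 1) * (πR (y.1 - 1) * πL (y.2.1 + 1) * πQ y.2.2))
    + (if y.1 = 0 then 0 else
        κSR * s * (πR (y.1 - 1) * πL y.2.1 * πQ y.2.2))
    + (κRS * u + κRI * (C_M - 1 + s)) * (y.1 + 1)
        * (πR (y.1 + 1) * πL y.2.1 * πQ y.2.2)
    + (if y.2.1 = 0 then 0 else
        κIL * (1 - s) * (πR y.1 * πL (y.2.1 - 1) * πQ y.2.2))
    + (if y.2.2 = 0 then 0 else
        κ0Q * (πR y.1 * πL y.2.1 * πQ (y.2.2 - 1)))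
    + κQU * u * (y.2.2 + 1) * (πR y.1 * πL y.2.1 * πQ (y.2.2 + 1))
    = (κLR * (C_U - u) * y.2.1 + κSR * s
        + (κRS * u + κRI * (C_M - 1 + s)) * y.1
        + κIL * (1 - s) + κ0Q + κQU * u * y.2.2)
      * (πR y.1 * πL y.2.1 * πQ y.2.2) := by
  obtain ⟨hs0, hs1⟩ := hs
  have hd1 : (0:ℝ) < κRI * (C_M - (1 - s)) + κRS * u := by nlinarith
  have hd2 : (0:ℝ) < κLR * (C_U - u) := by nlinarith
  have hd3 : (0:ℝ) < κQU * u := by positivity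
  set aR := (κIL * (1 - s) + κSR * s) / (κRI * (C_M - (1 - s)) + κRS * u) with haR
  set aL := κIL * (1 - s) / (κLR * (C_U - u)) with haL
  set aQ := κ0Q / (κQU * u) with haQ
  have eR : ∀ n : ℕ, (κRS * u + κRI * (C_M - 1 + s)) * ((n : ℝ) + 1)
      * poissonP aR (n + 1) = (κIL * (1 - s) + κSR * s) * poissonP aR n := by
    intro n
    rw [poissonP_succ, haR]
    have h2 : ((n : ℝ) + 1) ≠ 0 := by positivity
    field_simp
    ring
  have eL : ∀ n : ℕ, κLR * (C_U - u) * ((n : ℝ) + 1)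
      * poissonP aL (n + 1) = κIL * (1 - s) * poissonP aL n := by
    intro n
    rw [poissonP_succ, haL]
    have h2 : ((n : ℝ) + 1) ≠ 0 := by positivity
    field_simp
    exact mul_div_cancel_left₀ _ (sub_ne_zero.mpr huC.ne')
  have eQ : ∀ n : ℕ, κQU * u * ((n : ℝ) + 1)
      * poissonP aQ (n + 1) = κ0Q * poissonP aQ n := by
    intro n
    rw [poissonP_succ, haQ]
    have h2 : ((n : ℝ) + 1) ≠ 0 := by positivity
    field_simp
  obtain ⟨r, l, q⟩ := y
  subst hπR hπL hπQ
  rcases r with _ | r <;> rcases l with _ | l <;> rcases q with _ | q <;>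
    simp only [if_neg (Nat.succ_ne_zero _), if_pos rfl, Nat.succ_sub_one]
  · -- (0,0,0)
    linear_combination (norm := (push_cast; ring1))
      (poissonP aL 0 * poissonP aQ 0) * eR 0
      + (poissonP aR 0 * poissonP aL 0) * eQ 0
  · -- (0,0,q+1)
    linear_combination (norm := (push_cast; ring1))
      (poissonP aL 0 * poissonP aQ (q+1)) * eR 0
      - (poissonP aR 0 * poissonP aL 0) * eQ q
      + (poissonP aR 0 * poissonP aL 0) * eQ (q+1)
  · -- (0,l+1,0)
    linear_combination (norm := (push_cast; ring1))
      (poissonP aL (l+1) * poissonP aQ 0) * eR 0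
      - (poissonP aR 0 * poissonP aQ 0) * eL l
      + (poissonP aR 0 * poissonP aL (l+1)) * eQ 0
  · -- (0,l+1,q+1)
    linear_combination (norm := (push_cast; ring1))
      (poissonP aL (l+1) * poissonP aQ (q+1)) * eR 0
      - (poissonP aR 0 * poissonP aQ (q+1)) * eL l
      - (poissonP aR 0 * poissonP aL (l+1)) * eQ q
      + (poissonP aR 0 * poissonP aL (l+1)) * eQ (q+1)
  · -- (r+1,0,0)
    linear_combination (norm := (push_cast; ring1))
      (poissonP aL 0 * poissonP aQ 0) * eR (r+1)
      - (poissonP aL 0 * poissonP aQ 0) * eR r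
      + (poissonP aR r * poissonP aQ 0) * eL 0
      + (poissonP aR (r+1) * poissonP aL 0) * eQ 0
  · -- (r+1,0,q+1)
    linear_combination (norm := (push_cast; ring1))
      (poissonP aL 0 * poissonP aQ (q+1)) * eR (r+1)
      - (poissonP aL 0 * poissonP aQ (q+1)) * eR r
      + (poissonP aR r * poissonP aQ (q+1)) * eL 0
      - (poissonP aR (r+1) * poissonP aL 0) * eQ q
      + (poissonP aR (r+1) * poissonP aL 0) * eQ (q+1)
  · -- (r+1,l+1,0)
    linear_combination (norm := (push_cast; ring1))
      (poissonP aL (l+1) * poissonP aQ 0) * eR (r+1)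
      - (poissonP aL (l+1) * poissonP aQ 0) * eR r
      + (poissonP aR r * poissonP aQ 0) * eL (l+1)
      - (poissonP aR (r+1) * poissonP aQ 0) * eL l
      + (poissonP aR (r+1) * poissonP aL (l+1)) * eQ 0
  · -- (r+1,l+1,q+1)
    linear_combination (norm := (push_cast; ring1))
      (poissonP aL (l+1) * poissonP aQ (q+1)) * eR (r+1)
      - (poissonP aL (l+1) * poissonP aQ (q+1)) * eR r
      + (poissonP aR r * poissonP aQ (q+1)) * eL (l+1)
      - (poissonP aR (r+1) * poissonP aQ (q+1)) * eL l
      - (poissonP aR (r+1) * poissonP aL (l+1)) * eQ q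
      + (poissonP aR (r+1) * poissonP aL (l+1)) * eQ (q+1)
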